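/- Let ν > 2, t > 0, and let m be any real number with 0 < m < ν. Then ∫_0^{ν/(t²+ν)} u^{ν/2 − 1} (1 − u)^{−1/2} du ≥ m^{ν/2 − 1} (ν − m) / (√(t² + ν − m) · (t² + ν)^{(ν−1)/2}). -/

import Mathlib

open MeasureTheory

/-- Lower bound for the incomplete beta integral appearing in the Mills-ratio type lemma. -/
theorem incomplete_beta_integral_lower_bound (ν m t : ℝ) (hν : 2 < ν) (ht : 0 < t)
    (hm : 0 < m) (hmν : m < ν) :
    m ^ (ν / 2 - 1) * (ν - m) / (Real.sqrt (t ^ 2 + ν - m) * (t ^ 2 + ν) ^ ((ν - 1) / 2)) ≤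
      ∫ u in Set.Ioo (0 : ℝ) (ν / (t ^ 2 + ν)), u ^ (ν / 2 - 1) * (1 - u) ^ (-(1 / 2) : ℝ) := by
  set s : ℝ := t ^ 2 + ν with hs_def
  have hs : (0:ℝ) < s := by positivity
  have hνpos : (0:ℝ) < ν := by linarith
  have hsν : ν < s := by nlinarith
  set p : ℝ := ν / 2 - 1 with hp_def
  have hp : (0:ℝ) ≤ p := by rw [hp_def]; linarith
  set a : ℝ := m / s with ha_def
  set b : ℝ := ν / s with hb_def
  have ha : 0 < a := div_pos hm hs
  have hab : a < b := by rw [ha_def, hb_def]; exact (div_lt_div_iff_of_pos_right hs).mpr hmν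
  have hb1 : b < 1 := by rw [hb_def, div_lt_one hs]; exact hsν
  have ha1 : a < 1 := hab.trans hb1
  set f : ℝ → ℝ := fun u => u ^ p * (1 - u) ^ (-(1 / 2) : ℝ) with hf_def
  have hmeas : Measurable f := by
    fun_prop
  have hnonneg : ∀ u ∈ Set.Ioo (0:ℝ) b, 0 ≤ f u := by
    intro u hu
    have hu0 : 0 < u := hu.1
    have h1 : 0 < 1 - u := by have := hu.2.trans hb1; linarith
    have hfu : f u = u ^ p * (1 - u) ^ (-(1 / 2) : ℝ) := rfl
    rw [hfu]; positivity
  -- constant lower bound on Ioo a b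
  set C : ℝ := a ^ p * (1 - a) ^ (-(1 / 2) : ℝ) with hC_def
  have hCle : ∀ u ∈ Set.Ioo a b, C ≤ f u := by
    intro u hu
    have hu0 : 0 < u := ha.trans hu.1
    have h1u : 0 < 1 - u := by have := hu.2.trans hb1; linarith
    have h1 : a ^ p ≤ u ^ p := Real.rpow_le_rpow ha.le hu.1.le hp
    have h2 : (1 - a) ^ (-(1 / 2) : ℝ) ≤ (1 - u) ^ (-(1 / 2) : ℝ) := by
      apply Real.rpow_le_rpow_of_nonpos h1u (by linarith [hu.1]) (by norm_num)
    have hap : 0 ≤ a ^ p := Real.rpow_nonneg ha.le p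
    have h1a : 0 ≤ (1 - a) ^ (-(1 / 2) : ℝ) := Real.rpow_nonneg (by linarith) _
    calc C = a ^ p * (1 - a) ^ (-(1 / 2) : ℝ) := rfl
      _ ≤ u ^ p * (1 - u) ^ (-(1 / 2) : ℝ) := by
          apply mul_le_mul h1 h2 h1a (Real.rpow_nonneg hu0.le p)
  -- integrability on Ioo 0 b
  have hintb : IntegrableOn f (Set.Ioo 0 b) := by
    have hint1 : IntegrableOn (fun u : ℝ => u ^ p) (Set.Ioo 0 b) := by
      have h := (intervalIntegral.intervalIntegrable_rpow' (a := 0) (b := b) (r := p) (by linarith)).1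
      exact h.mono_set Set.Ioo_subset_Ioc_self
    apply Integrable.mono' (g := fun u => (1 - b) ^ (-(1 / 2) : ℝ) * u ^ p)
    · exact (hint1.const_mul _)
    · exact hmeas.aestronglyMeasurable.restrict
    · filter_upwards [ae_restrict_mem measurableSet_Ioo] with u hu
      have hu0 : 0 < u := hu.1
      have h1u : 0 < 1 - u := by have := hu.2; linarith
      have : (1 - u) ^ (-(1 / 2) : ℝ) ≤ (1 - b) ^ (-(1 / 2) : ℝ) :=
        Real.rpow_le_rpow_of_nonpos (by linarith) (by linarith [hu.2]) (by norm_num)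
      rw [Real.norm_eq_abs, abs_of_nonneg (hnonneg u hu)]
      calc f u = u ^ p * (1 - u) ^ (-(1 / 2) : ℝ) := rfl
        _ ≤ u ^ p * (1 - b) ^ (-(1 / 2) : ℝ) := by
            apply mul_le_mul_of_nonneg_left this (Real.rpow_nonneg hu0.le p)
        _ = (1 - b) ^ (-(1 / 2) : ℝ) * u ^ p := mul_comm _ _
  have hsub : Set.Ioo a b ⊆ Set.Ioo 0 b := Set.Ioo_subset_Ioo ha.le le_rfl
  have hintab : IntegrableOn f (Set.Ioo a b) := hintb.mono_set hsub
  -- step 1: constant bound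
  have step1 : C * (b - a) ≤ ∫ u in Set.Ioo a b, f u := by
    have := MeasureTheory.setIntegral_ge_of_const_le (μ := volume) (s := Set.Ioo a b)
      measurableSet_Ioo (by simp) hCle hintab
    simp [Real.volume_Ioo, ENNReal.toReal_ofReal (by linarith [hab] : (0:ℝ) ≤ b - a)] at this
    rw [max_eq_left (by linarith [hab] : (0:ℝ) ≤ b - a)] at this
    linarith [mul_comm C (b - a)]
  -- step 2: monotone in set
  have step2 : (∫ u in Set.Ioo a b, f u) ≤ ∫ u in Set.Ioo (0:ℝ) b, f u := by
    apply MeasureTheory.setIntegral_mono_set hintb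
    · filter_upwards [ae_restrict_mem measurableSet_Ioo] with u hu using hnonneg u hu
    · exact Filter.Eventually.of_forall hsub
  -- arithmetic identity
  have key : m ^ p * (ν - m) / (Real.sqrt (s - m) * s ^ ((ν - 1) / 2)) = C * (b - a) := by
    have hsm : (0:ℝ) < s - m := by linarith
    have h1a' : 1 - a = (s - m) / s := by rw [ha_def]; field_simp
    have hba : b - a = (ν - m) / s := by rw [ha_def, hb_def]; ring
    have hx1 : (s:ℝ) ^ p ≠ 0 := (Real.rpow_pos_of_pos hs p).ne'
    have hx2 : (s:ℝ) ^ ((1:ℝ)/2) ≠ 0 := (Real.rpow_pos_of_pos hs _).ne'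
    have hx3 : (s - m) ^ ((1:ℝ)/2) ≠ 0 := (Real.rpow_pos_of_pos hsm _).ne'
    have e1 : Real.sqrt (s - m) = (s - m) ^ ((1:ℝ)/2) := Real.sqrt_eq_rpow _
    have e2 : s ^ ((ν - 1)/2) * s ^ ((1:ℝ)/2) = s ^ p * s := by
      have h2 : s ^ p * s = s ^ p * s ^ (1:ℝ) := by rw [Real.rpow_one]
      rw [h2, ← Real.rpow_add hs, ← Real.rpow_add hs, hp_def]
      congr 1
      ring
    have e2' : s ^ ((ν - 1)/2) = s ^ p * s / s ^ ((1:ℝ)/2) := by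
      rw [eq_div_iff hx2]
      exact e2
    have e3 : ((s - m)/s) ^ (-(1/2):ℝ) = s ^ ((1:ℝ)/2) / (s - m) ^ ((1:ℝ)/2) := by
      rw [Real.rpow_neg (div_nonneg hsm.le hs.le), Real.div_rpow hsm.le hs.le, inv_div]
    rw [hC_def, h1a', hba, ha_def, Real.div_rpow hm.le hs.le, e1, e2', e3]
    field_simp
  calc m ^ p * (ν - m) / (Real.sqrt (s - m) * s ^ ((ν - 1) / 2)) = C * (b - a) := key
    _ ≤ ∫ u in Set.Ioo a b, f u := step1
    _ ≤ ∫ u in Set.Ioo (0:ℝ) b, f u := step2
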